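/- arXiv:2411.01625 — 2 statements merged into one kernel-verified Lean document; each statement's English description precedes it below -/
import Mathlib

section
/- Let f be a square-integrable function of independent random variables W = (W1,...,WK) with i.i.d. copy W', and let I_S(w,w') = sum over S' subset of S of (-1)^{|S|-|S'|} f(w'_{S'}, w_{-S'}) be the interaction contrast. For any two disjoint subsets S and S' of {1,...,K}, Cov(I_S(W,W'), I_{S'}(W,W')) = (-1/2)^{|S|+|S'|} * Var(I_{S ∪ S'}(W, W')). -/
open MeasureTheory ProbabilityTheory Finset

/-- Hybrid point: coordinates in `S'` from `w'`, the rest from `w`. -/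
def hybrid {K : ℕ} (S' : Finset (Fin K)) (w' w : Fin K → ℝ) : Fin K → ℝ :=
  fun i => if i ∈ S' then w' i else w i


variable {K : ℕ}

lemma hybrid_hybrid_self (B : Finset (Fin K)) (w w' : Fin K → ℝ) :
    hybrid B (hybrid B w w') (hybrid B w' w) = w := by
  funext i; simp only [hybrid]; by_cases h : i ∈ B <;> simp [h]

lemma hybrid_hybrid (A B : Finset (Fin K)) (w w' : Fin K → ℝ) :
    hybrid A (hybrid B w w') (hybrid B w' w) = hybrid (symmDiff A B) w' w := by
  funext i
  simp only [hybrid, Finset.mem_symmDiff]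
  by_cases hA : i ∈ A <;> by_cases hB : i ∈ B <;> simp [hA, hB]

lemma measurable_hybrid (C : Finset (Fin K)) :
    Measurable (fun p : (Fin K → ℝ) × (Fin K → ℝ) => hybrid C p.2 p.1) := by
  apply measurable_pi_lambda
  intro i
  by_cases h : i ∈ C <;> simp only [hybrid, h, if_true, if_false]
  · exact (measurable_pi_apply i).comp measurable_snd
  · exact (measurable_pi_apply i).comp measurable_fst

/-- the permutation of `Fin K ⊕ Fin K` swapping the two copies of each `i ∈ C`. -/
def swapSumPerm (C : Finset (Fin K)) : (Fin K ⊕ Fin K) ≃ (Fin K ⊕ Fin K) where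
  toFun j := match j with
    | .inl i => if i ∈ C then .inr i else .inl i
    | .inr i => if i ∈ C then .inl i else .inr i
  invFun j := match j with
    | .inl i => if i ∈ C then .inr i else .inl i
    | .inr i => if i ∈ C then .inl i else .inr i
  left_inv j := by rcases j with i | i <;> by_cases h : i ∈ C <;> simp [h]
  right_inv j := by rcases j with i | i <;> by_cases h : i ∈ C <;> simp [h]

lemma swapSumPerm_invol (C : Finset (Fin K)) (j : Fin K ⊕ Fin K) :
    swapSumPerm C (swapSumPerm C j) = j := (swapSumPerm C).left_inv j

/-- the swap map as a function on pairs. -/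
def hybridSwap (C : Finset (Fin K)) (p : (Fin K → ℝ) × (Fin K → ℝ)) :
    (Fin K → ℝ) × (Fin K → ℝ) :=
  (hybrid C p.2 p.1, hybrid C p.1 p.2)

lemma hybridSwap_invol (C : Finset (Fin K)) (p : (Fin K → ℝ) × (Fin K → ℝ)) :
    hybridSwap C (hybridSwap C p) = p := by
  cases p with
  | mk w w' =>
    simp only [hybridSwap]
    exact Prod.ext (hybrid_hybrid_self C w w') (hybrid_hybrid_self C w' w)

lemma measurable_hybridSwap (C : Finset (Fin K)) : Measurable (hybridSwap C) :=
  (measurable_hybrid C).prodMk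
    ((measurable_hybrid C).comp (measurable_snd.prodMk measurable_fst))

/-- the swap as a measurable equivalence. -/
def hybridSwapEquiv (C : Finset (Fin K)) :
    ((Fin K → ℝ) × (Fin K → ℝ)) ≃ᵐ ((Fin K → ℝ) × (Fin K → ℝ)) where
  toFun := hybridSwap C
  invFun := hybridSwap C
  left_inv := hybridSwap_invol C
  right_inv := hybridSwap_invol C
  measurable_toFun := measurable_hybridSwap C
  measurable_invFun := measurable_hybridSwap C

lemma measurePreserving_hybridSwap (m : Fin K → Measure ℝ) [∀ i, SigmaFinite (m i)]
    (C : Finset (Fin K)) :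
    MeasurePreserving (hybridSwap C)
      ((Measure.pi m).prod (Measure.pi m)) ((Measure.pi m).prod (Measure.pi m)) := by
  set μ0 : Fin K ⊕ Fin K → Measure ℝ := Sum.elim m m with hμ0
  letI hσ : ∀ j, SigmaFinite (μ0 j) := by rintro (i | i) <;> exact (inferInstance : SigmaFinite (m i))
  have h1 : MeasurePreserving (⇑(MeasurableEquiv.sumPiEquivProdPi (fun _ : Fin K ⊕ Fin K => ℝ)).symm)
      ((Measure.pi m).prod (Measure.pi m)) (Measure.pi μ0) :=
    measurePreserving_sumPiEquivProdPi_symm μ0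
  have hpi : (Measure.pi fun j => μ0 (swapSumPerm C j)) = Measure.pi μ0 := by
    congr 1
    funext j
    rcases j with i | i <;> by_cases h : i ∈ C <;> simp [swapSumPerm, μ0, h]
  have h2 : MeasurePreserving
      (⇑(MeasurableEquiv.piCongrLeft (fun _ : Fin K ⊕ Fin K => ℝ) (swapSumPerm C)))
      (Measure.pi μ0) (Measure.pi μ0) := by
    have := measurePreserving_piCongrLeft μ0 (swapSumPerm C)
    rwa [hpi] at this
  have h3 : MeasurePreserving (⇑(MeasurableEquiv.sumPiEquivProdPi (fun _ : Fin K ⊕ Fin K => ℝ)))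
      (Measure.pi μ0) ((Measure.pi m).prod (Measure.pi m)) := by
    have := h1.symm (MeasurableEquiv.sumPiEquivProdPi (fun _ : Fin K ⊕ Fin K => ℝ)).symm
    simpa using this
  have hcomp := h3.comp (h2.comp h1)
  have hfun : (⇑(MeasurableEquiv.sumPiEquivProdPi (fun _ : Fin K ⊕ Fin K => ℝ)) ∘
      (⇑(MeasurableEquiv.piCongrLeft (fun _ : Fin K ⊕ Fin K => ℝ) (swapSumPerm C)) ∘
      ⇑(MeasurableEquiv.sumPiEquivProdPi (fun _ : Fin K ⊕ Fin K => ℝ)).symm)) = hybridSwap C := by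
    funext p
    have key : ∀ j : Fin K ⊕ Fin K,
        (MeasurableEquiv.piCongrLeft (fun _ : Fin K ⊕ Fin K => ℝ) (swapSumPerm C))
          ((MeasurableEquiv.sumPiEquivProdPi (fun _ : Fin K ⊕ Fin K => ℝ)).symm p) j
        = ((MeasurableEquiv.sumPiEquivProdPi (fun _ : Fin K ⊕ Fin K => ℝ)).symm p)
            (swapSumPerm C j) := by
      intro j
      conv_lhs => rw [← swapSumPerm_invol C j]
      rw [MeasurableEquiv.coe_piCongrLeft]
      rw [Equiv.piCongrLeft_apply_apply]
    have hx : ((MeasurableEquiv.sumPiEquivProdPi (fun _ : Fin K ⊕ Fin K => ℝ)).symm p)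
        = Sum.elim p.1 p.2 := by
      funext j; rcases j with i | i <;> rfl
    apply Prod.ext
    · funext i
      show (MeasurableEquiv.piCongrLeft (fun _ : Fin K ⊕ Fin K => ℝ) (swapSumPerm C))
        ((MeasurableEquiv.sumPiEquivProdPi (fun _ : Fin K ⊕ Fin K => ℝ)).symm p) (Sum.inl i)
        = hybrid C p.2 p.1 i
      rw [key, hx]
      by_cases h : i ∈ C <;> simp [swapSumPerm, h, hybrid]
    · funext i
      show (MeasurableEquiv.piCongrLeft (fun _ : Fin K ⊕ Fin K => ℝ) (swapSumPerm C))
        ((MeasurableEquiv.sumPiEquivProdPi (fun _ : Fin K ⊕ Fin K => ℝ)).symm p) (Sum.inr i)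
        = hybrid C p.1 p.2 i
      rw [key, hx]
      by_cases h : i ∈ C <;> simp [swapSumPerm, h, hybrid]
  rwa [hfun] at hcomp

/-! ### Combinatorics -/

lemma neg_one_pow_mod (a b : ℕ) (h : a % 2 = b % 2) : ((-1 : ℝ)) ^ a = (-1) ^ b := by
  rcases Nat.even_or_odd a with ha | ha
  · have hb : Even b := by rw [Nat.even_iff] at *; omega
    rw [ha.neg_one_pow, hb.neg_one_pow]
  · have hb : Odd b := by
      rw [Nat.odd_iff]; rw [Nat.odd_iff] at ha; omega
    rw [ha.neg_one_pow, hb.neg_one_pow]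

lemma card_symmDiff_par (A B : Finset (Fin K)) :
    (symmDiff A B).card % 2 = (A.card + B.card) % 2 := by
  have h1 : symmDiff A B = (A ∪ B) \ (A ∩ B) := by
    ext i
    simp only [Finset.mem_symmDiff, Finset.mem_sdiff, Finset.mem_union, Finset.mem_inter]
    tauto
  have h2 := Finset.card_union_add_card_inter A B
  have h3 : (A ∩ B) ⊆ (A ∪ B) :=
    (Finset.inter_subset_left).trans Finset.subset_union_left
  have h4 := Finset.card_le_card h3
  rw [h1, Finset.card_sdiff_of_subset h3]
  omega

lemma inner_reindex (U A : Finset (Fin K)) (hA : A ∈ U.powerset) (g : Finset (Fin K) → ℝ) :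
    ∑ B ∈ U.powerset, (-1 : ℝ) ^ (U.card - A.card + (U.card - B.card)) * g (symmDiff A B)
      = ∑ D ∈ U.powerset, (-1 : ℝ) ^ D.card * g D := by
  rw [Finset.mem_powerset] at hA
  refine Finset.sum_bij' (fun B _ => symmDiff A B) (fun D _ => symmDiff A D) ?_ ?_ ?_ ?_ ?_
  · intro B hB
    rw [Finset.mem_powerset] at hB ⊢
    exact (symmDiff_le_sup (a := A) (b := B)).trans (sup_le hA hB)
  · intro D hD
    rw [Finset.mem_powerset] at hD ⊢
    exact (symmDiff_le_sup (a := A) (b := D)).trans (sup_le hA hD)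
  · intro B _; exact symmDiff_symmDiff_cancel_left A B
  · intro D _; exact symmDiff_symmDiff_cancel_left A D
  · intro B hB
    rw [Finset.mem_powerset] at hB
    congr 1
    refine neg_one_pow_mod _ _ ?_
    have h1 := card_symmDiff_par A B
    have h2 := Finset.card_le_card hA
    have h3 := Finset.card_le_card hB
    omega

lemma step2 (U : Finset (Fin K)) (g : Finset (Fin K) → ℝ) :
    ∑ A ∈ U.powerset, ∑ B ∈ U.powerset,
        (-1 : ℝ) ^ (U.card - A.card) * (-1) ^ (U.card - B.card) * g (symmDiff A B)
      = 2 ^ U.card * ∑ D ∈ U.powerset, (-1 : ℝ) ^ D.card * g D := by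
  have h : ∀ A ∈ U.powerset, ∑ B ∈ U.powerset,
      (-1 : ℝ) ^ (U.card - A.card) * (-1) ^ (U.card - B.card) * g (symmDiff A B)
      = ∑ D ∈ U.powerset, (-1 : ℝ) ^ D.card * g D := by
    intro A hA
    rw [← inner_reindex U A hA g]
    refine Finset.sum_congr rfl fun B _ => ?_
    rw [← pow_add]
  rw [Finset.sum_congr rfl h, Finset.sum_const, Finset.card_powerset, nsmul_eq_mul]
  norm_num

lemma step1 (S S' : Finset (Fin K)) (hdisj : Disjoint S S') (g : Finset (Fin K) → ℝ) :
    ∑ T ∈ S.powerset, ∑ T' ∈ S'.powerset,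
        (-1 : ℝ) ^ (S.card - T.card) * (-1) ^ (S'.card - T'.card) * g (symmDiff T T')
      = ∑ D ∈ (S ∪ S').powerset, (-1 : ℝ) ^ ((S ∪ S').card - D.card) * g D := by
  rw [← Finset.sum_product']
  refine Finset.sum_bij' (fun x _ => x.1 ∪ x.2) (fun D _ => (D ∩ S, D ∩ S')) ?_ ?_ ?_ ?_ ?_
  · intro x hx
    rw [Finset.mem_product] at hx
    rw [Finset.mem_powerset] at hx ⊢
    rw [Finset.mem_powerset] at hx
    exact Finset.union_subset_union hx.1 hx.2
  · intro D hD
    rw [Finset.mem_product, Finset.mem_powerset, Finset.mem_powerset]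
    exact ⟨Finset.inter_subset_right, Finset.inter_subset_right⟩
  · intro x hx
    rw [Finset.mem_product, Finset.mem_powerset, Finset.mem_powerset] at hx
    have h1 : x.1 ∩ S = x.1 := Finset.inter_eq_left.mpr hx.1
    have h2 : x.2 ∩ S' = x.2 := Finset.inter_eq_left.mpr hx.2
    have h3 : x.2 ∩ S = ∅ :=
      Finset.disjoint_iff_inter_eq_empty.mp (hdisj.symm.mono_left hx.2)
    have h4 : x.1 ∩ S' = ∅ :=
      Finset.disjoint_iff_inter_eq_empty.mp (hdisj.mono_left hx.1)
    rw [Finset.union_inter_distrib_right, Finset.union_inter_distrib_right, h1, h2, h3, h4,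
      Finset.union_empty, Finset.empty_union]
  · intro D hD
    rw [Finset.mem_powerset] at hD
    dsimp only
    rw [← Finset.inter_union_distrib_left]
    exact Finset.inter_eq_left.mpr hD
  · intro x hx
    rw [Finset.mem_product, Finset.mem_powerset, Finset.mem_powerset] at hx
    have hdx : Disjoint x.1 x.2 := hdisj.mono hx.1 hx.2
    rw [hdx.symmDiff_eq_sup]
    have hcard : (x.1 ∪ x.2).card = x.1.card + x.2.card := Finset.card_union_of_disjoint hdx
    have hUcard : (S ∪ S').card = S.card + S'.card := Finset.card_union_of_disjoint hdisj
    have h1 := Finset.card_le_card hx.1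
    have h2 := Finset.card_le_card hx.2
    rw [← pow_add]
    congr 1
    · refine neg_one_pow_mod _ _ ?_
      rw [hcard, hUcard]
      omega


/-- Interaction contrast of `f` with respect to `S`, anchored at `w`, evaluated at `w'`. -/
def interactionContrast {K : ℕ} (f : (Fin K → ℝ) → ℝ) (S : Finset (Fin K))
    (w w' : Fin K → ℝ) : ℝ :=
  ∑ S' ∈ S.powerset, (-1 : ℝ)^(S.card - S'.card) * f (hybrid S' w' w)


lemma measurable_interC {K : ℕ} {f : (Fin K → ℝ) → ℝ} (hf : Measurable f)
    (R : Finset (Fin K)) :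
    Measurable (fun p : (Fin K → ℝ) × (Fin K → ℝ) => interactionContrast f R p.1 p.2) := by
  unfold interactionContrast
  exact Finset.measurable_sum _ fun T _ =>
    (measurable_const.mul (hf.comp (measurable_hybrid T)))

lemma map_hybrid_eq {K : ℕ} (m : Fin K → Measure ℝ) [∀ i, IsProbabilityMeasure (m i)]
    (C : Finset (Fin K)) :
    Measure.map (fun p : (Fin K → ℝ) × (Fin K → ℝ) => hybrid C p.2 p.1)
      ((Measure.pi m).prod (Measure.pi m)) = Measure.pi m := by
  have h1 : (fun p : (Fin K → ℝ) × (Fin K → ℝ) => hybrid C p.2 p.1)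
      = Prod.fst ∘ hybridSwap C := rfl
  rw [h1, ← Measure.map_map measurable_fst (measurable_hybridSwap C),
    (measurePreserving_hybridSwap m C).map_eq, Measure.map_fst_prod]
  simp

lemma memL2_hybrid {K : ℕ} (m : Fin K → Measure ℝ) [∀ i, IsProbabilityMeasure (m i)]
    {f : (Fin K → ℝ) → ℝ} (hf : Measurable f) (hfm : MemLp f 2 (Measure.pi m))
    (C : Finset (Fin K)) :
    MemLp (fun p : (Fin K → ℝ) × (Fin K → ℝ) => f (hybrid C p.2 p.1)) 2
      ((Measure.pi m).prod (Measure.pi m)) := by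
  have h2 : MemLp f 2 (Measure.map (fun p : (Fin K → ℝ) × (Fin K → ℝ) => hybrid C p.2 p.1)
      ((Measure.pi m).prod (Measure.pi m))) := by
    rw [map_hybrid_eq m C]; exact hfm
  exact (memLp_map_measure_iff hf.aestronglyMeasurable
    (measurable_hybrid C).aemeasurable).mp h2

theorem nu_side {K : ℕ} (m : Fin K → Measure ℝ) [∀ i, IsProbabilityMeasure (m i)]
    (f : (Fin K → ℝ) → ℝ) (hf : Measurable f)
    (hfm : MemLp f 2 (Measure.pi m))
    (S S' : Finset (Fin K)) (hdisj : Disjoint S S') :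
    (∫ p, interactionContrast f S p.1 p.2 * interactionContrast f S' p.1 p.2
        ∂((Measure.pi m).prod (Measure.pi m)))
      - (∫ p, interactionContrast f S p.1 p.2 ∂((Measure.pi m).prod (Measure.pi m)))
        * (∫ p, interactionContrast f S' p.1 p.2 ∂((Measure.pi m).prod (Measure.pi m)))
    = (-(1/2) : ℝ)^(S.card + S'.card) *
      ((∫ p, interactionContrast f (S ∪ S') p.1 p.2 * interactionContrast f (S ∪ S') p.1 p.2
          ∂((Measure.pi m).prod (Measure.pi m)))
        - (∫ p, interactionContrast f (S ∪ S') p.1 p.2 ∂((Measure.pi m).prod (Measure.pi m)))^2) := by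
  set ν : Measure ((Fin K → ℝ) × (Fin K → ℝ)) := (Measure.pi m).prod (Measure.pi m) with hνdef
  have memL2 : ∀ C : Finset (Fin K),
      MemLp (fun p : (Fin K → ℝ) × (Fin K → ℝ) => f (hybrid C p.2 p.1)) 2 ν :=
    fun C => memL2_hybrid m hf hfm C
  have integ : ∀ C : Finset (Fin K),
      Integrable (fun p : (Fin K → ℝ) × (Fin K → ℝ) => f (hybrid C p.2 p.1)) ν :=
    fun C => (memL2 C).integrable one_le_two
  have integ_mul : ∀ A B : Finset (Fin K),
      Integrable (fun p : (Fin K → ℝ) × (Fin K → ℝ) =>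
        f (hybrid A p.2 p.1) * f (hybrid B p.2 p.1)) ν := by
    intro A B
    have h12 : (1 : ENNReal) / 1 = 1 / 2 + 1 / 2 := by
      rw [ENNReal.div_add_div_same, one_div_one]
      norm_num
      rw [ENNReal.div_self] <;> norm_num
    have := (memL2 B).smul (r := 1) (memL2 A)
    exact memLp_one_iff_integrable.mp this
  -- the correlation kernel
  set g : Finset (Fin K) → ℝ :=
    fun D => ∫ p, f (hybrid D p.2 p.1) * f p.1 ∂ν with hgdef
  have c1 : ∀ A B : Finset (Fin K),
      ∫ p, f (hybrid A p.2 p.1) * f (hybrid B p.2 p.1) ∂ν = g (symmDiff A B) := by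
    intro A B
    have h := (measurePreserving_hybridSwap m B).integral_comp
      (hybridSwapEquiv B).measurableEmbedding
      (fun p : (Fin K → ℝ) × (Fin K → ℝ) => f (hybrid A p.2 p.1) * f (hybrid B p.2 p.1))
    rw [← h]
    refine integral_congr_ae (Filter.Eventually.of_forall fun p => ?_)
    show f (hybrid A (hybridSwap B p).2 (hybridSwap B p).1)
        * f (hybrid B (hybridSwap B p).2 (hybridSwap B p).1)
      = f (hybrid (symmDiff A B) p.2 p.1) * f p.1
    simp only [hybridSwap]
    rw [hybrid_hybrid, hybrid_hybrid_self]
  have c2 : ∀ A : Finset (Fin K),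
      ∫ p, f (hybrid A p.2 p.1) ∂ν = ∫ p, f p.1 ∂ν := by
    intro A
    have h := (measurePreserving_hybridSwap m A).integral_comp
      (hybridSwapEquiv A).measurableEmbedding
      (fun p : (Fin K → ℝ) × (Fin K → ℝ) => f (hybrid A p.2 p.1))
    rw [← h]
    refine integral_congr_ae (Filter.Eventually.of_forall fun p => ?_)
    show f (hybrid A (hybridSwap A p).2 (hybridSwap A p).1) = f p.1
    simp only [hybridSwap]
    rw [hybrid_hybrid_self]
  set E : ℝ := ∫ p, f p.1 ∂ν with hEdef
  -- expansion of second moments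
  have expand2 : ∀ R R' : Finset (Fin K),
      ∫ p, interactionContrast f R p.1 p.2 * interactionContrast f R' p.1 p.2 ∂ν
      = ∑ T ∈ R.powerset, ∑ T' ∈ R'.powerset,
          (-1 : ℝ)^(R.card - T.card) * (-1 : ℝ)^(R'.card - T'.card) * g (symmDiff T T') := by
    intro R R'
    have hpt : ∀ p : (Fin K → ℝ) × (Fin K → ℝ),
        interactionContrast f R p.1 p.2 * interactionContrast f R' p.1 p.2
        = ∑ T ∈ R.powerset, ∑ T' ∈ R'.powerset,
            ((-1 : ℝ)^(R.card - T.card) * (-1 : ℝ)^(R'.card - T'.card))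
              * (f (hybrid T p.2 p.1) * f (hybrid T' p.2 p.1)) := by
      intro p
      rw [interactionContrast, interactionContrast, Finset.sum_mul_sum]
      refine Finset.sum_congr rfl fun T _ => Finset.sum_congr rfl fun T' _ => by ring
    simp_rw [hpt]
    rw [integral_finset_sum _ (fun T _ => integrable_finset_sum _
      (fun T' _ => ((integ_mul T T').const_mul _)))]
    refine Finset.sum_congr rfl fun T _ => ?_
    rw [integral_finset_sum _ (fun T' _ => ((integ_mul T T').const_mul _))]
    refine Finset.sum_congr rfl fun T' _ => ?_
    rw [integral_const_mul, c1]
  -- expansion of first moments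
  have expand1 : ∀ R : Finset (Fin K),
      ∫ p, interactionContrast f R p.1 p.2 ∂ν
        = (if R = ∅ then (1 : ℝ) else 0) * E := by
    intro R
    have hpt : ∀ p : (Fin K → ℝ) × (Fin K → ℝ),
        interactionContrast f R p.1 p.2
        = ∑ T ∈ R.powerset, (-1 : ℝ)^(R.card - T.card) * f (hybrid T p.2 p.1) := by
      intro p; rw [interactionContrast]
    simp_rw [hpt]
    rw [integral_finset_sum _ (fun T _ => (integ T).const_mul _)]
    have : ∀ T ∈ R.powerset, (∫ p, (-1 : ℝ)^(R.card - T.card) * f (hybrid T p.2 p.1) ∂ν)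
        = (-1 : ℝ)^(R.card - T.card) * E := by
      intro T hT
      rw [integral_const_mul, c2]
    rw [Finset.sum_congr rfl this, ← Finset.sum_mul]
    congr 1
    have hsgn : ∀ T ∈ R.powerset, (-1 : ℝ)^(R.card - T.card) = (-1 : ℝ)^R.card * (-1 : ℝ)^T.card := by
      intro T hT
      rw [Finset.mem_powerset] at hT
      have := Finset.card_le_card hT
      rw [← pow_add]
      exact neg_one_pow_mod _ _ (by omega)
    have hsum : ∑ T ∈ R.powerset, (-1 : ℝ)^T.card = if R = ∅ then 1 else 0 := by
      have h := Finset.sum_powerset_neg_one_pow_card (x := R)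
      have h2 : ((∑ T ∈ R.powerset, (-1 : ℤ)^T.card : ℤ) : ℝ)
          = ∑ T ∈ R.powerset, (-1 : ℝ)^T.card := by push_cast; rfl
      rw [← h2, h]
      split <;> simp
    rw [Finset.sum_congr rfl hsgn, ← Finset.mul_sum, hsum]
    by_cases hR : R = ∅ <;> simp [hR]
  -- now pure algebra
  rw [expand2 S S', expand2 (S ∪ S') (S ∪ S'), expand1 S, expand1 S', expand1 (S ∪ S')]
  have hUcard : (S ∪ S').card = S.card + S'.card := Finset.card_union_of_disjoint hdisj
  have hmain : ∑ T ∈ S.powerset, ∑ T' ∈ S'.powerset,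
        (-1 : ℝ)^(S.card - T.card) * (-1 : ℝ)^(S'.card - T'.card) * g (symmDiff T T')
      = (-(1/2) : ℝ)^(S.card + S'.card) *
        ∑ A ∈ (S ∪ S').powerset, ∑ B ∈ (S ∪ S').powerset,
          (-1 : ℝ)^((S ∪ S').card - A.card) * (-1 : ℝ)^((S ∪ S').card - B.card) * g (symmDiff A B) := by
    rw [step1 S S' hdisj g, step2 (S ∪ S') g, ← mul_assoc]
    have hc : (-(1/2) : ℝ)^(S.card + S'.card) * 2 ^ (S ∪ S').card = (-1 : ℝ)^(S ∪ S').card := by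
      rw [hUcard, ← mul_pow]
      norm_num
    rw [hc, Finset.mul_sum]
    refine Finset.sum_congr rfl fun D hD => ?_
    rw [Finset.mem_powerset] at hD
    have := Finset.card_le_card hD
    rw [← mul_assoc, ← pow_add]
    congr 1
    exact (neg_one_pow_mod _ _ (by omega)).symm
  rw [hmain]
  have hmean : ((if S = ∅ then (1:ℝ) else 0) * E) * ((if S' = ∅ then (1:ℝ) else 0) * E)
      = (-(1/2) : ℝ)^(S.card + S'.card) * (((if S ∪ S' = ∅ then (1:ℝ) else 0) * E)^2) := by
    by_cases hS : S = ∅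
    · by_cases hS' : S' = ∅
      · simp [hS, hS', pow_two]
      · simp [hS, hS', Finset.union_eq_empty]
    · have hU : S ∪ S' ≠ ∅ := fun h => hS (Finset.union_eq_empty.mp h).1
      simp [hS, hU]
  rw [hmean]
  ring


/-- `Cov(I_S(W,W'), I_{S'}(W,W')) = (-1/2)^{|S|+|S'|} Var(I_{S ∪ S'}(W,W'))`
for disjoint `S`, `S'`. -/
theorem stmt6 {Ω : Type*} [MeasurableSpace Ω] (μ : Measure Ω) [IsProbabilityMeasure μ]
    {K : ℕ} (W W' : Ω → Fin K → ℝ)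
    (hW : Measurable W) (hW' : Measurable W')
    (hiW : iIndepFun
      (fun i ω => W ω i) μ)
    (hcopy : μ.map W' = μ.map W)
    (hindep : IndepFun W W' μ)
    (f : (Fin K → ℝ) → ℝ) (hf : Measurable f)
    (hL2 : MemLp (fun ω => f (W ω)) 2 μ)
    (S S' : Finset (Fin K)) (hdisj : Disjoint S S') :
    (∫ ω, interactionContrast f S (W ω) (W' ω) * interactionContrast f S' (W ω) (W' ω) ∂μ)
        - (∫ ω, interactionContrast f S (W ω) (W' ω) ∂μ)
          * (∫ ω, interactionContrast f S' (W ω) (W' ω) ∂μ)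
      = (-(1/2) : ℝ)^(S.card + S'.card)
        * variance (fun ω => interactionContrast f (S ∪ S') (W ω) (W' ω)) μ := by
  set m : Fin K → Measure ℝ := fun i => Measure.map (fun ω => W ω i) μ with hm
  haveI hpm : ∀ i, IsProbabilityMeasure (m i) := fun i =>
    Measure.isProbabilityMeasure_map ((measurable_pi_apply i).comp hW).aemeasurable
  -- the law of `W` is the product measure
  have hpiW : Measure.map W μ = Measure.pi m := by
    refine (Measure.pi_eq fun s hs => ?_).symm
    rw [Measure.map_apply hW (MeasurableSet.univ_pi hs)]
    have hpre : W ⁻¹' (Set.univ.pi s) = ⋂ i ∈ Finset.univ, (fun ω => W ω i) ⁻¹' (s i) := by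
      ext ω; simp [Set.mem_pi]
    rw [hpre, hiW.measure_inter_preimage_eq_mul Finset.univ (fun i _ => hs i)]
    exact Finset.prod_congr rfl fun i _ =>
      (Measure.map_apply ((measurable_pi_apply i).comp hW) (hs i)).symm
  have hZ : Measurable (fun ω => (W ω, W' ω)) := hW.prodMk hW'
  -- the joint law of `(W, W')`
  have hν : Measure.map (fun ω => (W ω, W' ω)) μ = (Measure.pi m).prod (Measure.pi m) := by
    rw [(indepFun_iff_map_prod_eq_prod_map_map hW.aemeasurable hW'.aemeasurable).mp hindep,
      hcopy, hpiW]
  have hfm : MemLp f 2 (Measure.pi m) := by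
    rw [← hpiW]
    exact (memLp_map_measure_iff hf.aestronglyMeasurable hW.aemeasurable).mpr hL2
  -- transfer of integrals
  have key : ∀ G : ((Fin K → ℝ) × (Fin K → ℝ)) → ℝ, Measurable G →
      ∫ ω, G (W ω, W' ω) ∂μ = ∫ p, G p ∂((Measure.pi m).prod (Measure.pi m)) := by
    intro G hG
    rw [← hν, integral_map hZ.aemeasurable hG.aestronglyMeasurable]
  have e1 : ∫ ω, interactionContrast f S (W ω) (W' ω) * interactionContrast f S' (W ω) (W' ω) ∂μ
      = ∫ p, interactionContrast f S p.1 p.2 * interactionContrast f S' p.1 p.2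
          ∂((Measure.pi m).prod (Measure.pi m)) :=
    key _ ((measurable_interC hf S).mul (measurable_interC hf S'))
  have e2 : ∫ ω, interactionContrast f S (W ω) (W' ω) ∂μ
      = ∫ p, interactionContrast f S p.1 p.2 ∂((Measure.pi m).prod (Measure.pi m)) :=
    key _ (measurable_interC hf S)
  have e3 : ∫ ω, interactionContrast f S' (W ω) (W' ω) ∂μ
      = ∫ p, interactionContrast f S' p.1 p.2 ∂((Measure.pi m).prod (Measure.pi m)) :=
    key _ (measurable_interC hf S')
  have e4 : ∫ ω, interactionContrast f (S ∪ S') (W ω) (W' ω) ∂μ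
      = ∫ p, interactionContrast f (S ∪ S') p.1 p.2 ∂((Measure.pi m).prod (Measure.pi m)) :=
    key _ (measurable_interC hf (S ∪ S'))
  -- `MemLp` of the interaction contrast
  have hXmem : MemLp (fun ω => interactionContrast f (S ∪ S') (W ω) (W' ω)) 2 μ := by
    have he : (fun ω => interactionContrast f (S ∪ S') (W ω) (W' ω))
        = ∑ T ∈ (S ∪ S').powerset,
            (fun ω => (-1 : ℝ)^((S ∪ S').card - T.card) * f (hybrid T (W' ω) (W ω))) := by
      funext ω
      rw [Finset.sum_apply]
      rfl
    rw [he]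
    refine memLp_finset_sum' _ fun T _ => ?_
    have hTm : Measurable (fun p : (Fin K → ℝ) × (Fin K → ℝ) => f (hybrid T p.2 p.1)) :=
      hf.comp (measurable_hybrid T)
    have h1 : MemLp (fun p : (Fin K → ℝ) × (Fin K → ℝ) => f (hybrid T p.2 p.1)) 2
        (Measure.map (fun ω => (W ω, W' ω)) μ) := by
      rw [hν]; exact memL2_hybrid m hf hfm T
    have h2 : MemLp (fun ω => f (hybrid T (W' ω) (W ω))) 2 μ :=
      (memLp_map_measure_iff hTm.aestronglyMeasurable hZ.aemeasurable).mp h1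
    exact h2.const_mul _
  rw [variance_eq_sub hXmem]
  have e5 : ∫ ω, ((fun ω => interactionContrast f (S ∪ S') (W ω) (W' ω))^2) ω ∂μ
      = ∫ p, interactionContrast f (S ∪ S') p.1 p.2 * interactionContrast f (S ∪ S') p.1 p.2
          ∂((Measure.pi m).prod (Measure.pi m)) := by
    have := key (fun p => interactionContrast f (S ∪ S') p.1 p.2 * interactionContrast f (S ∪ S') p.1 p.2)
      ((measurable_interC hf (S ∪ S')).mul (measurable_interC hf (S ∪ S')))
    rw [← this]
    refine integral_congr_ae (Filter.Eventually.of_forall fun ω => ?_)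
    simp [pow_two]
  rw [e1, e2, e3, e5, e4]
  exact nu_side m f hf hfm S S' hdisj
end

section
/- Let S be a nonempty subset of {1,...,K} and suppose the last index K is not in S. Let W have independent coordinates, W' an i.i.d. copy, f square-integrable. Then Var(I_{S ∪ {K}}(W,W')) = 2*Var(I_S(W,W')) - 2*E[T_K(I_S(W,W')) * I_S(W,W')], where T_K swaps W_K and W'_K in the expression, and moreover E[T_K(I_S(W,W')) * I_S(W,W')] = E[ (E[I_S(W,W') | W_{-K}, W'_{-K}])^2 ] >= 0. -/
open MeasureTheory ProbabilityTheory Finset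

open scoped ENNReal

section Aux

variable {α β γ δ : Type*} [MeasurableSpace α] [MeasurableSpace β] [MeasurableSpace γ]
  [MeasurableSpace δ]

lemma mp_fst' {μ : Measure α} {ν : Measure β} [SFinite μ] [IsProbabilityMeasure ν] :
    MeasurePreserving Prod.fst (μ.prod ν) μ :=
  ⟨measurable_fst, by rw [Measure.map_fst_prod, measure_univ, one_smul]⟩

lemma mp_snd' {μ : Measure α} {ν : Measure β} [IsProbabilityMeasure μ] [SFinite ν] :
    MeasurePreserving Prod.snd (μ.prod ν) ν :=
  ⟨measurable_snd, by rw [Measure.map_snd_prod, measure_univ, one_smul]⟩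

lemma mp_pcc (a : Measure α) (b : Measure β) (c : Measure γ) (d : Measure δ)
    [SFinite a] [SFinite b] [SFinite c] [SFinite d] :
    MeasurePreserving (fun m : (α × β) × (γ × δ) => ((m.1.1, m.2.1), (m.1.2, m.2.2)))
      ((a.prod b).prod (c.prod d)) ((a.prod c).prod (b.prod d)) := by
  have h1 := measurePreserving_prodAssoc a b (c.prod d)
  have h2 : MeasurePreserving
      (Prod.map (id : α → α) (⇑(MeasurableEquiv.prodAssoc (α := β) (β := γ) (γ := δ)).symm))
      (a.prod (b.prod (c.prod d))) (a.prod ((b.prod c).prod d)) :=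
    (MeasurePreserving.id a).prod
      (MeasurePreserving.symm _ (measurePreserving_prodAssoc b c d))
  have h3 : MeasurePreserving
      (Prod.map (id : α → α) (Prod.map (Prod.swap : β × γ → γ × β) (id : δ → δ)))
      (a.prod ((b.prod c).prod d)) (a.prod ((c.prod b).prod d)) :=
    (MeasurePreserving.id a).prod
      (Measure.measurePreserving_swap.prod (MeasurePreserving.id d))
  have h4 : MeasurePreserving
      (Prod.map (id : α → α) (⇑(MeasurableEquiv.prodAssoc (α := γ) (β := β) (γ := δ))))
      (a.prod ((c.prod b).prod d)) (a.prod (c.prod (b.prod d))) :=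
    (MeasurePreserving.id a).prod (measurePreserving_prodAssoc c b d)
  have h5 := MeasurePreserving.symm _ (measurePreserving_prodAssoc a c (b.prod d))
  have htot := h5.comp (h4.comp (h3.comp (h2.comp h1)))
  convert htot using 1
  funext ⟨⟨x1, x2⟩, x3, x4⟩
  rfl

lemma MeasureTheory.MeasurePreserving.integral_comp'' {μa : Measure α} {μb : Measure β} {f : α → β}
    (h : MeasurePreserving f μa μb) {g : β → ℝ} (hg : AEStronglyMeasurable g μb) :
    ∫ x, g (f x) ∂μa = ∫ y, g y ∂μb := by
  rw [← h.map_eq] at hg ⊢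
  exact (integral_map h.measurable.aemeasurable hg).symm

lemma MeasureTheory.MeasurePreserving.memℒp_comp' {μa : Measure α} {μb : Measure β} {f : α → β} {p : ℝ≥0∞}
    (h : MeasurePreserving f μa μb) {g : β → ℝ} (hg : AEStronglyMeasurable g μb)
    (hgp : MemLp g p μb) : MemLp (fun x => g (f x)) p μa := by
  rw [← h.map_eq] at hg hgp
  exact (memLp_map_measure_iff hg h.measurable.aemeasurable).mp hgp

lemma MeasureTheory.MeasurePreserving.integrable_comp'' {μa : Measure α} {μb : Measure β} {f : α → β}
    (h : MeasurePreserving f μa μb) {g : β → ℝ} (hg : AEStronglyMeasurable g μb)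
    (hgi : Integrable g μb) : Integrable (fun x => g (f x)) μa := by
  rw [← h.map_eq] at hg hgi
  exact (integrable_map_measure hg h.measurable.aemeasurable).mp hgi

lemma MeasureTheory.MeasurePreserving.integrable_of_comp' {μa : Measure α} {μb : Measure β} {f : α → β}
    (h : MeasurePreserving f μa μb) {g : β → ℝ} (hg : AEStronglyMeasurable g μb)
    (hgi : Integrable (fun x => g (f x)) μa) : Integrable g μb := by
  rw [← h.map_eq] at hg ⊢
  exact (integrable_map_measure hg h.measurable.aemeasurable).mpr hgi

lemma neg_one_pow_sub_real {m n : ℕ} (h : m ≤ n) :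
    (-1 : ℝ) ^ (n - m) = (-1) ^ n * (-1) ^ m := by
  have h1 : (-1 : ℝ) ^ (n - m) * ((-1) ^ m * (-1) ^ m) = (-1) ^ (n - m) := by
    rw [← mul_pow]; norm_num
  calc (-1 : ℝ) ^ (n - m) = (-1) ^ (n - m) * (-1) ^ m * (-1) ^ m := by
        rw [mul_assoc, h1]
    _ = (-1) ^ n * (-1) ^ m := by rw [← pow_add, Nat.sub_add_cancel h]

lemma sum_signs_zero {K : ℕ} {S : Finset (Fin K)} (hS : S.Nonempty) :
    ∑ S' ∈ S.powerset, (-1 : ℝ) ^ (S.card - S'.card) = 0 := by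
  have h := Finset.sum_powerset_neg_one_pow_card_of_nonempty hS
  have h0 : ∑ S' ∈ S.powerset, (-1 : ℝ) ^ S'.card = 0 := by
    have := congrArg (fun z : ℤ => (z : ℝ)) h
    push_cast at this
    simpa using this
  calc ∑ S' ∈ S.powerset, (-1 : ℝ) ^ (S.card - S'.card)
      = ∑ S' ∈ S.powerset, (-1 : ℝ) ^ S.card * (-1) ^ S'.card := by
        refine Finset.sum_congr rfl fun S' hS' => ?_
        exact neg_one_pow_sub_real (Finset.card_le_card (Finset.mem_powerset.mp hS'))
    _ = (-1 : ℝ) ^ S.card * ∑ S' ∈ S.powerset, (-1 : ℝ) ^ S'.card := by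
        rw [Finset.mul_sum]
    _ = 0 := by rw [h0, mul_zero]

end Aux

section Comb

variable {K : ℕ}

lemma ic_congr_right (f : (Fin K → ℝ) → ℝ) (S : Finset (Fin K)) {w w' w'' : Fin K → ℝ}
    (h : ∀ i ∈ S, w' i = w'' i) :
    interactionContrast f S w w' = interactionContrast f S w w'' := by
  unfold interactionContrast
  refine Finset.sum_congr rfl fun S' hS' => ?_
  have hhyb : hybrid S' w' w = hybrid S' w'' w := by
    funext i
    by_cases hi : i ∈ S'
    · simp [hybrid, hi, h i (Finset.mem_powerset.mp hS' hi)]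
    · simp [hybrid, hi]
  rw [hhyb]

lemma hybrid_insert {S' : Finset (Fin K)} {j : Fin K} (hj : j ∉ S') (w' w : Fin K → ℝ) :
    hybrid (insert j S') w' w = hybrid S' w' (Function.update w j (w' j)) := by
  funext i
  by_cases hi : i ∈ S'
  · simp [hybrid, hi, Finset.mem_insert_of_mem hi]
  · by_cases hij : i = j
    · subst hij; simp [hybrid, hi]
    · simp [hybrid, hi, hij, Function.update_of_ne hij]

lemma ic_split (f : (Fin K → ℝ) → ℝ) (S : Finset (Fin K)) (k : Fin K) (hk : k ∉ S)
    (w w' : Fin K → ℝ) :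
    interactionContrast f (S ∪ {k}) w w'
      = interactionContrast f S (Function.update w k (w' k)) (Function.update w' k (w k))
        - interactionContrast f S w w' := by
  have hins : S ∪ {k} = insert k S := by rw [Finset.union_comm, ← Finset.insert_eq]
  have hic2 : interactionContrast f S (Function.update w k (w' k)) (Function.update w' k (w k))
      = interactionContrast f S (Function.update w k (w' k)) w' := by
    refine ic_congr_right f S fun i hi => ?_
    exact Function.update_of_ne (fun hik : i = k => hk (hik ▸ hi)) _ _
  rw [hic2, hins]
  unfold interactionContrast
  rw [Finset.powerset_insert]
  have hdisj : Disjoint S.powerset (S.powerset.image (insert k)) := by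
    refine Finset.disjoint_left.mpr fun a ha ha' => ?_
    obtain ⟨b, _, rfl⟩ := Finset.mem_image.mp ha'
    exact hk (Finset.mem_powerset.mp ha (Finset.mem_insert_self k b))
  rw [Finset.sum_union hdisj]
  have hinj : ∀ x ∈ S.powerset, ∀ y ∈ S.powerset, insert k x = insert k y → x = y := by
    intro x hx y hy hxy
    have hkx : k ∉ x := fun h => hk (Finset.mem_powerset.mp hx h)
    have hky : k ∉ y := fun h => hk (Finset.mem_powerset.mp hy h)
    rw [← Finset.erase_insert hkx, ← Finset.erase_insert hky, hxy]
  rw [Finset.sum_image hinj]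
  have h1 : ∀ S' ∈ S.powerset,
      (-1 : ℝ) ^ ((insert k S).card - S'.card) * f (hybrid S' w' w)
        = -((-1 : ℝ) ^ (S.card - S'.card) * f (hybrid S' w' w)) := by
    intro S' hS'
    have hle : S'.card ≤ S.card := Finset.card_le_card (Finset.mem_powerset.mp hS')
    rw [Finset.card_insert_of_notMem hk]
    have hsub : S.card + 1 - S'.card = (S.card - S'.card) + 1 := by omega
    rw [hsub, pow_succ]
    ring
  have h2 : ∀ S' ∈ S.powerset,
      (-1 : ℝ) ^ ((insert k S).card - (insert k S').card) * f (hybrid (insert k S') w' w)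
        = (-1 : ℝ) ^ (S.card - S'.card) * f (hybrid S' w' (Function.update w k (w' k))) := by
    intro S' hS'
    have hkS' : k ∉ S' := fun h => hk (Finset.mem_powerset.mp hS' h)
    rw [Finset.card_insert_of_notMem hk, Finset.card_insert_of_notMem hkS']
    have hle : S'.card ≤ S.card := Finset.card_le_card (Finset.mem_powerset.mp hS')
    have hsub : S.card + 1 - (S'.card + 1) = S.card - S'.card := by omega
    rw [hsub, hybrid_insert hkS']
  rw [Finset.sum_congr rfl h1, Finset.sum_congr rfl h2, Finset.sum_neg_distrib]
  ring

lemma ic_T_expand (f : (Fin K → ℝ) → ℝ) (S : Finset (Fin K)) (k : Fin K) (hk : k ∉ S)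
    (x y : Fin K → ℝ) :
    interactionContrast f S (Function.update x k (y k)) (Function.update y k (x k))
      = ∑ S' ∈ S.powerset, (-1 : ℝ) ^ (S.card - S'.card) * f (hybrid (insert k S') y x) := by
  have hic2 : interactionContrast f S (Function.update x k (y k)) (Function.update y k (x k))
      = interactionContrast f S (Function.update x k (y k)) y := by
    refine ic_congr_right f S fun i hi => ?_
    exact Function.update_of_ne (fun hik : i = k => hk (hik ▸ hi)) _ _
  rw [hic2]
  unfold interactionContrast
  refine Finset.sum_congr rfl fun S' hS' => ?_
  have hkS' : k ∉ S' := fun h => hk (Finset.mem_powerset.mp hS' h)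
  rw [hybrid_insert hkS']

lemma measurable_ic_pair {f : (Fin K → ℝ) → ℝ} (hf : Measurable f) (S : Finset (Fin K)) :
    Measurable (fun z : (Fin K → ℝ) × (Fin K → ℝ) => interactionContrast f S z.1 z.2) := by
  unfold interactionContrast
  refine Finset.measurable_sum _ fun S' _ => ?_
  refine Measurable.const_mul ?_ _
  refine hf.comp (measurable_pi_lambda _ fun i => ?_)
  by_cases hi : i ∈ S'
  · simpa [hybrid, hi, Function.comp_def] using (measurable_pi_apply i).comp measurable_snd
  · simpa [hybrid, hi, Function.comp_def] using (measurable_pi_apply i).comp measurable_fst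

end Comb

section Hyb

variable {K : ℕ}

lemma esymm_apply_pos {p : Fin K → Prop} [DecidablePred p]
    (a : ∀ i : Subtype p, ℝ) (u : ∀ i : {i : Fin K // ¬ p i}, ℝ) {i : Fin K} (hi : p i) :
    (MeasurableEquiv.piEquivPiSubtypeProd (fun _ : Fin K => ℝ) p).symm (a, u) i = a ⟨i, hi⟩ :=
  dif_pos hi

lemma esymm_apply_neg {p : Fin K → Prop} [DecidablePred p]
    (a : ∀ i : Subtype p, ℝ) (u : ∀ i : {i : Fin K // ¬ p i}, ℝ) {i : Fin K} (hi : ¬ p i) :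
    (MeasurableEquiv.piEquivPiSubtypeProd (fun _ : Fin K => ℝ) p).symm (a, u) i = u ⟨i, hi⟩ :=
  dif_neg hi

lemma hybrid_measurePreserving (ν : Fin K → Measure ℝ) [∀ i, IsProbabilityMeasure (ν i)]
    (S' : Finset (Fin K)) :
    MeasurePreserving (fun z : (Fin K → ℝ) × (Fin K → ℝ) => hybrid S' z.2 z.1)
      ((Measure.pi ν).prod (Measure.pi ν)) (Measure.pi ν) := by
  classical
  set e := MeasurableEquiv.piEquivPiSubtypeProd (fun _ : Fin K => ℝ) (fun i => i ∈ S') with he_def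
  have he := measurePreserving_piEquivPiSubtypeProd ν (fun i => i ∈ S')
  have hcomp := (MeasurePreserving.symm e he).comp
    ((MeasurePreserving.prod mp_snd' mp_fst').comp
      ((mp_pcc _ _ _ _).comp (he.prod he)))
  have hfun : (fun z : (Fin K → ℝ) × (Fin K → ℝ) => hybrid S' z.2 z.1)
      = (⇑e.symm ∘ (Prod.map Prod.snd Prod.fst ∘
          ((fun m => ((m.1.1, m.2.1), (m.1.2, m.2.2))) ∘ Prod.map ⇑e ⇑e))) := by
    funext z
    show hybrid S' z.2 z.1 = e.symm ((e z.2).1, (e z.1).2)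
    funext i
    by_cases hi : i ∈ S'
    · rw [esymm_apply_pos _ _ hi]
      simp [hybrid, hi, he_def, MeasurableEquiv.piEquivPiSubtypeProd, Equiv.piEquivPiSubtypeProd]
    · rw [esymm_apply_neg _ _ hi]
      simp [hybrid, hi, he_def, MeasurableEquiv.piEquivPiSubtypeProd, Equiv.piEquivPiSubtypeProd]
  rw [hfun]
  exact hcomp

end Hyb

/-- The σ-algebra generated by the coordinates of `W` and `W'` other than the `k`-th. -/
def coordSigmaPairNot {Ω : Type*} [MeasurableSpace Ω] {K : ℕ} (W W' : Ω → Fin K → ℝ)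
    (k : Fin K) : MeasurableSpace Ω :=
  MeasurableSpace.comap
    (fun ω => ((fun i : {i : Fin K // i ≠ k} => W ω i),
               (fun i : {i : Fin K // i ≠ k} => W' ω i))) inferInstance

set_option maxHeartbeats 1600000 in
/-- With `T_k` swapping the `k`-th coordinates of `W` and `W'` (`k ∉ S`):
`Var(I_{S∪{k}}(W,W')) = 2 Var(I_S(W,W')) - 2 E[T_k(I_S(W,W')) I_S(W,W')]`, and
`E[T_k(I_S(W,W')) I_S(W,W')] = E[(E[I_S(W,W') | W_{-k}, W'_{-k}])²] ≥ 0`. -/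
theorem stmt17 {Ω : Type*} [MeasurableSpace Ω] (μ : Measure Ω) [IsProbabilityMeasure μ]
    {K : ℕ} (W W' : Ω → Fin K → ℝ)
    (hW : Measurable W) (hW' : Measurable W')
    (hiW : iIndepFun
      (fun i ω => W ω i) μ)
    (hcopy : μ.map W' = μ.map W)
    (hindep : IndepFun W W' μ)
    (f : (Fin K → ℝ) → ℝ) (hf : Measurable f)
    (hL2 : MemLp (fun ω => f (W ω)) 2 μ)
    (S : Finset (Fin K)) (hS : S.Nonempty) (k : Fin K) (hk : k ∉ S)
    (TkIS : Ω → ℝ)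
    (hTk : TkIS = fun ω => interactionContrast f S
      (Function.update (W ω) k (W' ω k)) (Function.update (W' ω) k (W ω k))) :
    (variance (fun ω => interactionContrast f (S ∪ {k}) (W ω) (W' ω)) μ
      = 2 * variance (fun ω => interactionContrast f S (W ω) (W' ω)) μ
        - 2 * ∫ ω, TkIS ω * interactionContrast f S (W ω) (W' ω) ∂μ) ∧
    (∫ ω, TkIS ω * interactionContrast f S (W ω) (W' ω) ∂μ
      = ∫ ω, ((μ[fun ω' => interactionContrast f S (W ω') (W' ω')
          | coordSigmaPairNot W W' k]) ω)^2 ∂μ) ∧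
    0 ≤ ∫ ω, TkIS ω * interactionContrast f S (W ω) (W' ω) ∂μ := by
  classical
  have hWi : ∀ i, Measurable fun ω => W ω i := fun i => (measurable_pi_apply i).comp hW
  set ν : Fin K → Measure ℝ := fun i => μ.map fun ω => W ω i with hν
  haveI hνP : ∀ i, IsProbabilityMeasure (ν i) :=
    fun i => Measure.isProbabilityMeasure_map (hWi i).aemeasurable
  set π : Measure (Fin K → ℝ) := Measure.pi ν with hπdef
  haveI : IsProbabilityMeasure π := by rw [hπdef]; infer_instance
  have hπ : μ.map W = π := by
    rw [hπdef]
    refine (Measure.pi_eq fun s hs => ?_).symm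
    rw [Measure.map_apply hW (MeasurableSet.univ_pi hs)]
    have hpre : W ⁻¹' Set.pi Set.univ s = ⋂ i ∈ Finset.univ, (fun ω => W ω i) ⁻¹' s i := by
      ext ω; simp [Set.mem_pi]
    rw [hpre, hiW.measure_inter_preimage_eq_mul Finset.univ (fun i _ => hs i)]
    exact Finset.prod_congr rfl fun i _ => (Measure.map_apply (hWi i) (hs i)).symm
  have mpWW' : MeasurePreserving (fun ω => (W ω, W' ω)) μ (π.prod π) :=
    ⟨hW.prodMk hW', by
      rw [(indepFun_iff_map_prod_eq_prod_map_map hW.aemeasurable hW'.aemeasurable).mp hindep,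
        hcopy, hπ]⟩
  have hfπ : MemLp f 2 π := by
    rw [← hπ]
    exact (memLp_map_measure_iff hf.aestronglyMeasurable hW.aemeasurable).mpr hL2
  have hybMP : ∀ S' : Finset (Fin K),
      MeasurePreserving (fun ω => hybrid S' (W' ω) (W ω)) μ π := fun S' =>
    (hybrid_measurePreserving ν S').comp mpWW'
  have hybL2 : ∀ S' : Finset (Fin K), MemLp (fun ω => f (hybrid S' (W' ω) (W ω))) 2 μ :=
    fun S' => (hybMP S').memℒp_comp' hf.aestronglyMeasurable hfπ
  have hybEf : ∀ S' : Finset (Fin K),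
      ∫ ω, f (hybrid S' (W' ω) (W ω)) ∂μ = ∫ x, f x ∂π :=
    fun S' => (hybMP S').integral_comp'' hf.aestronglyMeasurable
  have hIsum : (fun ω => interactionContrast f S (W ω) (W' ω))
      = fun ω => ∑ S' ∈ S.powerset, (-1 : ℝ) ^ (S.card - S'.card)
          * f (hybrid S' (W' ω) (W ω)) := rfl
  have hTsum : TkIS = fun ω =>
      ∑ S' ∈ S.powerset, (-1 : ℝ) ^ (S.card - S'.card)
        * f (hybrid (insert k S') (W' ω) (W ω)) := by
    rw [hTk]; funext ω; exact ic_T_expand f S k hk (W ω) (W' ω)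
  have hL2I : MemLp (fun ω => interactionContrast f S (W ω) (W' ω)) 2 μ := by
    rw [hIsum, ← Finset.sum_fn]
    exact memLp_finset_sum' _ fun S' _ => ((hybL2 S').const_mul _)
  have hL2T : MemLp TkIS 2 μ := by
    rw [hTsum, ← Finset.sum_fn]
    exact memLp_finset_sum' _ fun S' _ => ((hybL2 _).const_mul _)
  have hIint := hL2I.integrable one_le_two
  have hTint := hL2T.integrable one_le_two
  have hEI0 : ∫ ω, interactionContrast f S (W ω) (W' ω) ∂μ = 0 := by
    rw [hIsum, integral_finset_sum _ fun S' _ => ((hybL2 S').integrable one_le_two).const_mul _]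
    have : ∀ S' ∈ S.powerset, ∫ ω, (-1 : ℝ) ^ (S.card - S'.card) * f (hybrid S' (W' ω) (W ω)) ∂μ
        = (-1 : ℝ) ^ (S.card - S'.card) * ∫ x, f x ∂π := by
      intro S' _
      rw [integral_const_mul, hybEf S']
    rw [Finset.sum_congr rfl this, ← Finset.sum_mul, sum_signs_zero hS, zero_mul]
  have hET0 : ∫ ω, TkIS ω ∂μ = 0 := by
    rw [hTsum, integral_finset_sum _ fun S' _ => ((hybL2 _).integrable one_le_two).const_mul _]
    have : ∀ S' ∈ S.powerset, ∫ ω, (-1 : ℝ) ^ (S.card - S'.card)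
          * f (hybrid (insert k S') (W' ω) (W ω)) ∂μ
        = (-1 : ℝ) ^ (S.card - S'.card) * ∫ x, f x ∂π := by
      intro S' _
      rw [integral_const_mul, hybEf _]
    rw [Finset.sum_congr rfl this, ← Finset.sum_mul, sum_signs_zero hS, zero_mul]
  have hTIint : Integrable (fun ω => TkIS ω * interactionContrast f S (W ω) (W' ω)) μ := by
    have h1 : MemLp (TkIS • fun ω => interactionContrast f S (W ω) (W' ω)) 1 μ :=
      hL2I.smul hL2T
    exact memLp_one_iff_integrable.mp h1
  -- decomposition at coordinate k
  set e := MeasurableEquiv.piEquivPiSubtypeProd (fun _ : Fin K => ℝ) (fun i : Fin K => i ≠ k)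
    with he_def
  set π₁ : Measure (∀ i : {i : Fin K // i ≠ k}, ℝ) := Measure.pi (fun i => ν i) with hπ₁def
  set π₂ : Measure (∀ i : {i : Fin K // ¬ i ≠ k}, ℝ) := Measure.pi (fun i => ν i) with hπ₂def
  haveI : IsProbabilityMeasure π₁ := by rw [hπ₁def]; infer_instance
  haveI : IsProbabilityMeasure π₂ := by rw [hπ₂def]; infer_instance
  have he : MeasurePreserving e π (π₁.prod π₂) := by
    rw [hπdef, hπ₁def, hπ₂def]
    exact measurePreserving_piEquivPiSubtypeProd ν _
  set ι : Ω → ((∀ i : {i : Fin K // i ≠ k}, ℝ) × (∀ i : {i : Fin K // i ≠ k}, ℝ))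
      × ((∀ i : {i : Fin K // ¬ i ≠ k}, ℝ) × (∀ i : {i : Fin K // ¬ i ≠ k}, ℝ)) :=
    fun ω => (((e (W ω)).1, (e (W' ω)).1), ((e (W ω)).2, (e (W' ω)).2)) with hιdef
  have mpι : MeasurePreserving ι μ ((π₁.prod π₁).prod (π₂.prod π₂)) :=
    (mp_pcc π₁ π₂ π₁ π₂).comp ((he.prod he).comp mpWW')
  set ψ : ((∀ i : {i : Fin K // i ≠ k}, ℝ) × (∀ i : {i : Fin K // i ≠ k}, ℝ))
      → (∀ i : {i : Fin K // ¬ i ≠ k}, ℝ) → ℝ :=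
    fun q u => interactionContrast f S (e.symm (q.1, u)) (e.symm (q.2, u)) with hψdef
  set g0 := fun q => ∫ u, ψ q u ∂π₂ with hg0def
  have hψm : Measurable (fun m : (((∀ i : {i : Fin K // i ≠ k}, ℝ)
        × (∀ i : {i : Fin K // i ≠ k}, ℝ)) × (∀ i : {i : Fin K // ¬ i ≠ k}, ℝ)) =>
      ψ m.1 m.2) := by
    rw [hψdef]
    exact (measurable_ic_pair hf S).comp
      ((e.symm.measurable.comp (measurable_fst.fst.prodMk measurable_snd)).prodMk
        (e.symm.measurable.comp (measurable_fst.snd.prodMk measurable_snd)))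
  have hg0m : Measurable g0 := by
    rw [hg0def]
    exact hψm.stronglyMeasurable.integral_prod_right'.measurable
  have hIι : ∀ ω, ψ (ι ω).1 (ι ω).2.1 = interactionContrast f S (W ω) (W' ω) := by
    intro ω
    show interactionContrast f S (e.symm ((e (W ω)).1, (e (W ω)).2))
        (e.symm ((e (W' ω)).1, (e (W ω)).2)) = _
    rw [show ((e (W ω)).1, (e (W ω)).2) = e (W ω) from rfl, e.symm_apply_apply]
    refine ic_congr_right f S fun i hi => ?_
    have hpi : i ≠ k := fun hik => hk (hik ▸ hi)
    rw [he_def, esymm_apply_pos (p := fun j : Fin K => j ≠ k) _ _ hpi]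
    rfl
  have hTι : ∀ ω, ψ (ι ω).1 (ι ω).2.2 = TkIS ω := by
    intro ω
    show interactionContrast f S (e.symm ((e (W ω)).1, (e (W' ω)).2))
        (e.symm ((e (W' ω)).1, (e (W' ω)).2)) = _
    rw [show ((e (W' ω)).1, (e (W' ω)).2) = e (W' ω) from rfl, e.symm_apply_apply, hTk]
    have harg : e.symm ((e (W ω)).1, (e (W' ω)).2) = Function.update (W ω) k (W' ω k) := by
      funext i
      by_cases hpi : i ≠ k
      · rw [he_def, esymm_apply_pos (p := fun j : Fin K => j ≠ k) _ _ hpi, Function.update_of_ne hpi]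
        rfl
      · rw [he_def, esymm_apply_neg (p := fun j : Fin K => j ≠ k) _ _ hpi]
        have hik : i = k := not_not.mp hpi
        subst hik
        rw [Function.update_self]
        rfl
    rw [harg]
    refine ic_congr_right f S fun i hi => ?_
    exact (Function.update_of_ne (fun hik : i = k => hk (hik ▸ hi)) _ _).symm
  -- functions on the decomposed space
  have hΦT : Measurable (fun m : (((∀ i : {i : Fin K // i ≠ k}, ℝ) × (∀ i : {i : Fin K // i ≠ k}, ℝ))
      × ((∀ i : {i : Fin K // ¬ i ≠ k}, ℝ) × (∀ i : {i : Fin K // ¬ i ≠ k}, ℝ))) => ψ m.1 m.2.2) :=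
    hψm.comp (measurable_fst.prodMk measurable_snd.snd)
  have hΦI : Measurable (fun m : (((∀ i : {i : Fin K // i ≠ k}, ℝ) × (∀ i : {i : Fin K // i ≠ k}, ℝ))
      × ((∀ i : {i : Fin K // ¬ i ≠ k}, ℝ) × (∀ i : {i : Fin K // ¬ i ≠ k}, ℝ))) => ψ m.1 m.2.1) :=
    hψm.comp (measurable_fst.prodMk measurable_snd.fst)
  have hψqm : ∀ q, Measurable (ψ q) := fun q => hψm.comp (measurable_const.prodMk measurable_id)
  have hTI_R_int : Integrable (fun m => ψ m.1 m.2.2 * ψ m.1 m.2.1)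
      ((π₁.prod π₁).prod (π₂.prod π₂)) := by
    refine mpι.integrable_of_comp' (hΦT.mul hΦI).aestronglyMeasurable ?_
    have hfn : (fun ω => ψ (ι ω).1 (ι ω).2.2 * ψ (ι ω).1 (ι ω).2.1)
        = fun ω => TkIS ω * interactionContrast f S (W ω) (W' ω) :=
      funext fun ω => by rw [hTι ω, hIι ω]
    exact hfn ▸ hTIint
  have hEexch : ∫ ω, TkIS ω * interactionContrast f S (W ω) (W' ω) ∂μ
      = ∫ m, ψ m.1 m.2.2 * ψ m.1 m.2.1 ∂((π₁.prod π₁).prod (π₂.prod π₂)) := by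
    rw [← mpι.integral_comp'' (g := fun m => ψ m.1 m.2.2 * ψ m.1 m.2.1)
      (hΦT.mul hΦI).aestronglyMeasurable]
    exact integral_congr_ae (Filter.Eventually.of_forall fun ω => by beta_reduce; rw [hTι ω, hIι ω])
  have hg0q : ∀ q, ∫ z, ψ q z.1 ∂(π₂.prod π₂) = g0 q := fun q =>
    mp_fst'.integral_comp'' (hψqm q).aestronglyMeasurable
  have hfub : ∫ m, ψ m.1 m.2.2 * ψ m.1 m.2.1 ∂((π₁.prod π₁).prod (π₂.prod π₂))
      = ∫ q, g0 q ^ 2 ∂(π₁.prod π₁) := by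
    rw [integral_prod _ hTI_R_int]
    refine integral_congr_ae (Filter.Eventually.of_forall fun q => ?_)
    show ∫ z, ψ q z.2 * ψ q z.1 ∂(π₂.prod π₂) = g0 q ^ 2
    have h1 : ∫ z, ψ q z.2 * ψ q z.1 ∂(π₂.prod π₂) = ∫ z, ψ q z.1 * ψ q z.2 ∂(π₂.prod π₂) :=
      integral_congr_ae (Filter.Eventually.of_forall fun z => mul_comm _ _)
    rw [h1, integral_prod_mul (fun u => ψ q u) (fun u => ψ q u), pow_two]
  have hkey : ∫ ω, TkIS ω * interactionContrast f S (W ω) (W' ω) ∂μ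
      = ∫ q, g0 q ^ 2 ∂(π₁.prod π₁) := hEexch.trans hfub
  -- second moments agree
  have hT2int : Integrable (fun ω => TkIS ω ^ 2) μ := hL2T.integrable_sq
  have hI2int : Integrable (fun ω => interactionContrast f S (W ω) (W' ω) ^ 2) μ :=
    hL2I.integrable_sq
  have hT2R : Integrable (fun m => ψ m.1 m.2.2 ^ 2) ((π₁.prod π₁).prod (π₂.prod π₂)) := by
    refine mpι.integrable_of_comp' (hΦT.pow_const 2).aestronglyMeasurable ?_
    have hfn : (fun ω => ψ (ι ω).1 (ι ω).2.2 ^ 2) = fun ω => TkIS ω ^ 2 :=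
      funext fun ω => by rw [hTι ω]
    exact hfn ▸ hT2int
  have hI2R : Integrable (fun m => ψ m.1 m.2.1 ^ 2) ((π₁.prod π₁).prod (π₂.prod π₂)) := by
    refine mpι.integrable_of_comp' (hΦI.pow_const 2).aestronglyMeasurable ?_
    have hfn : (fun ω => ψ (ι ω).1 (ι ω).2.1 ^ 2)
        = fun ω => interactionContrast f S (W ω) (W' ω) ^ 2 :=
      funext fun ω => by rw [hIι ω]
    exact hfn ▸ hI2int
  have hET2 : ∫ ω, TkIS ω ^ 2 ∂μ = ∫ ω, interactionContrast f S (W ω) (W' ω) ^ 2 ∂μ := by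
    have t1 : ∫ ω, TkIS ω ^ 2 ∂μ
        = ∫ m, ψ m.1 m.2.2 ^ 2 ∂((π₁.prod π₁).prod (π₂.prod π₂)) := by
      rw [← mpι.integral_comp'' (hΦT.pow_const 2).aestronglyMeasurable]
      exact integral_congr_ae (Filter.Eventually.of_forall fun ω => by beta_reduce; rw [hTι ω])
    have t2 : ∫ ω, interactionContrast f S (W ω) (W' ω) ^ 2 ∂μ
        = ∫ m, ψ m.1 m.2.1 ^ 2 ∂((π₁.prod π₁).prod (π₂.prod π₂)) := by
      rw [← mpι.integral_comp'' (hΦI.pow_const 2).aestronglyMeasurable]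
      exact integral_congr_ae (Filter.Eventually.of_forall fun ω => by beta_reduce; rw [hIι ω])
    rw [t1, t2, integral_prod _ hT2R, integral_prod _ hI2R]
    refine integral_congr_ae (Filter.Eventually.of_forall fun q => ?_)
    show ∫ z, ψ q z.2 ^ 2 ∂(π₂.prod π₂) = ∫ z, ψ q z.1 ^ 2 ∂(π₂.prod π₂)
    rw [mp_snd'.integral_comp'' ((hψqm q).pow_const 2).aestronglyMeasurable,
      mp_fst'.integral_comp'' ((hψqm q).pow_const 2).aestronglyMeasurable]
  -- conditional expectation identification
  set gen : Ω → ((∀ i : {i : Fin K // i ≠ k}, ℝ) × (∀ i : {i : Fin K // i ≠ k}, ℝ)) :=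
    fun ω => ((fun i : {i : Fin K // i ≠ k} => W ω i),
      (fun i : {i : Fin K // i ≠ k} => W' ω i)) with hgendef
  have hgenm : Measurable gen := by
    rw [hgendef]
    exact (measurable_pi_lambda _ fun i => (measurable_pi_apply _).comp hW).prodMk
      (measurable_pi_lambda _ fun i => (measurable_pi_apply _).comp hW')
  have hGdef : coordSigmaPairNot W W' k = MeasurableSpace.comap gen inferInstance := by
    rw [hgendef]; rfl
  have hGle : coordSigmaPairNot W W' k ≤ (inferInstance : MeasurableSpace Ω) := by
    rw [hGdef]; exact hgenm.comap_le
  have mpgen : MeasurePreserving gen μ (π₁.prod π₁) := by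
    have h1 := mp_fst'.comp mpι
    have h2 : (Prod.fst ∘ ι) = gen := rfl
    rwa [h2] at h1
  set c : Ω → ℝ := fun ω => g0 (gen ω) with hcdef
  have hcmG : Measurable[coordSigmaPairNot W W' k] c := by
    rw [hGdef, hcdef]
    exact hg0m.comp (Measurable.of_comap_le le_rfl)
  have hψIR : Integrable (fun m => ψ m.1 m.2.1) ((π₁.prod π₁).prod (π₂.prod π₂)) := by
    refine mpι.integrable_of_comp' hΦI.aestronglyMeasurable ?_
    have hfn : (fun ω => ψ (ι ω).1 (ι ω).2.1)
        = fun ω => interactionContrast f S (W ω) (W' ω) := funext fun ω => by rw [hIι ω]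
    exact hfn ▸ hIint
  have hg0int : Integrable g0 (π₁.prod π₁) := by
    have h1 := hψIR.integral_prod_left
    have h2 : (fun q => ∫ z, ψ q z.1 ∂(π₂.prod π₂)) = g0 := funext fun q => hg0q q
    rwa [h2] at h1
  have hcint : Integrable c μ := by
    have h1 := mpgen.integrable_comp'' hg0m.aestronglyMeasurable hg0int
    rw [hcdef]; exact h1
  have hcsq : ∫ ω, c ω ^ 2 ∂μ = ∫ q, g0 q ^ 2 ∂(π₁.prod π₁) := by
    have h1 := mpgen.integral_comp'' (g := fun q => g0 q ^ 2)
      (hg0m.pow_const 2).aestronglyMeasurable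
    rw [hcdef]; exact h1
  have hce : c =ᵐ[μ] μ[(fun ω' => interactionContrast f S (W ω') (W' ω'))
      | coordSigmaPairNot W W' k] := by
    refine ae_eq_condExp_of_forall_setIntegral_eq hGle hIint
      (fun s _ _ => hcint.integrableOn) (fun s hs _ => ?_)
      (hcmG.stronglyMeasurable.aestronglyMeasurable)
    have hs' : ∃ B, MeasurableSet B ∧ gen ⁻¹' B = s := by rw [hGdef] at hs; exact hs
    obtain ⟨B, hB, rfl⟩ := hs'
    have hL : ∫ x in gen ⁻¹' B, c x ∂μ = ∫ q in B, g0 q ∂(π₁.prod π₁) := by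
      rw [hcdef, ← mpgen.map_eq,
        setIntegral_map hB (by rw [mpgen.map_eq]; exact hg0m.aestronglyMeasurable)
          mpgen.measurable.aemeasurable]
    have hR : ∫ x in gen ⁻¹' B, interactionContrast f S (W x) (W' x) ∂μ
        = ∫ q in B, g0 q ∂(π₁.prod π₁) := by
      have hset : gen ⁻¹' B = ι ⁻¹' (Prod.fst ⁻¹' B) := rfl
      have hfn : (fun x => interactionContrast f S (W x) (W' x))
          = fun x => ψ (ι x).1 (ι x).2.1 := funext fun ω => (hIι ω).symm
      rw [hset, hfn]
      have hmap := setIntegral_map (μ := μ) (hB.preimage measurable_fst)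
        (by rw [mpι.map_eq]; exact hΦI.aestronglyMeasurable) mpι.measurable.aemeasurable
        (f := fun m => ψ m.1 m.2.1)
      rw [mpι.map_eq] at hmap
      rw [← hmap, ← Set.prod_univ, setIntegral_prod _ hψIR.integrableOn]
      simp only [Measure.restrict_univ]
      refine integral_congr_ae (Filter.Eventually.of_forall fun q => ?_)
      show ∫ z, ψ q z.1 ∂(π₂.prod π₂) = g0 q
      exact hg0q q
    rw [hL, hR]
  -- assemble
  have hcesq : ∫ ω, ((μ[fun ω' => interactionContrast f S (W ω') (W' ω')
      | coordSigmaPairNot W W' k]) ω) ^ 2 ∂μ = ∫ ω, c ω ^ 2 ∂μ :=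
    integral_congr_ae ((hce.symm).fun_comp (fun x : ℝ => x ^ 2))
  have hpart2 : ∫ ω, TkIS ω * interactionContrast f S (W ω) (W' ω) ∂μ
      = ∫ ω, ((μ[fun ω' => interactionContrast f S (W ω') (W' ω')
          | coordSigmaPairNot W W' k]) ω) ^ 2 ∂μ := by
    rw [hkey, hcesq, hcsq]
  refine ⟨?_, hpart2, ?_⟩
  · have hJfun : (fun ω => interactionContrast f (S ∪ {k}) (W ω) (W' ω))
        = fun ω => TkIS ω - interactionContrast f S (W ω) (W' ω) := by
      funext ω; rw [hTk]; exact ic_split f S k hk (W ω) (W' ω)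
    have hL2J : MemLp (fun ω => TkIS ω - interactionContrast f S (W ω) (W' ω)) 2 μ :=
      hL2T.sub hL2I
    rw [hJfun, variance_eq_sub hL2J, variance_eq_sub hL2I]
    have e1 : μ[(fun ω => TkIS ω - interactionContrast f S (W ω) (W' ω)) ^ 2]
        = ∫ ω, (TkIS ω ^ 2 - 2 * (TkIS ω * interactionContrast f S (W ω) (W' ω))
            + interactionContrast f S (W ω) (W' ω) ^ 2) ∂μ := by
      refine integral_congr_ae (Filter.Eventually.of_forall fun ω => ?_)
      show (TkIS ω - interactionContrast f S (W ω) (W' ω)) ^ 2 = _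
      ring
    have e2 : ∫ ω, (TkIS ω ^ 2 - 2 * (TkIS ω * interactionContrast f S (W ω) (W' ω))
          + interactionContrast f S (W ω) (W' ω) ^ 2) ∂μ
        = ∫ ω, TkIS ω ^ 2 ∂μ - 2 * ∫ ω, TkIS ω * interactionContrast f S (W ω) (W' ω) ∂μ
          + ∫ ω, interactionContrast f S (W ω) (W' ω) ^ 2 ∂μ := by
      have i2 : Integrable (fun ω => 2 * (TkIS ω * interactionContrast f S (W ω) (W' ω))) μ :=
        hTIint.const_mul 2
      have i1 : Integrable (fun ω => TkIS ω ^ 2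
          - 2 * (TkIS ω * interactionContrast f S (W ω) (W' ω))) μ := hT2int.sub i2
      rw [integral_add i1 hI2int, integral_sub hT2int i2, integral_const_mul]
    have e3 : μ[fun ω => TkIS ω - interactionContrast f S (W ω) (W' ω)] = 0 := by
      show ∫ ω, (TkIS ω - interactionContrast f S (W ω) (W' ω)) ∂μ = 0
      rw [integral_sub hTint hIint, hET0, hEI0, sub_zero]
    have e4 : μ[(fun ω => interactionContrast f S (W ω) (W' ω)) ^ 2]
        = ∫ ω, interactionContrast f S (W ω) (W' ω) ^ 2 ∂μ := by
      refine integral_congr_ae (Filter.Eventually.of_forall fun ω => ?_)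
      show interactionContrast f S (W ω) (W' ω) ^ 2 = _
      rfl
    have e5 : μ[fun ω => interactionContrast f S (W ω) (W' ω)] = 0 := hEI0
    rw [e1, e2, e3, e4, e5, hET2]
    ring
  · rw [hkey]
    exact integral_nonneg fun q => sq_nonneg _
end
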